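/- Let μ be a centred probability measure on ℝ (not the point mass at 0) with inverse barycentre function β_μ. If μ places positive mass on (x,∞) for some x > 0, then the function r ↦ 1/(r - β_μ(r)) is integrable on [0,x]. -/

import Mathlib

open MeasureTheory Set

/-- Let μ be a centred probability measure on ℝ, not the point mass at 0, with
inverse barycentre `β_μ` (the argmin of `y ↦ C_μ(y)/(r-y)` over `y < r`).
If μ places positive mass on `(x,∞)` for some `x > 0`, then
`r ↦ 1/(r - β_μ(r))` is integrable on `[0,x]`. -/
theorem stmt_13 (μ : Measure ℝ) [IsProbabilityMeasure μ]
    (hne : μ ≠ Measure.dirac 0)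
    (hint : Integrable id μ) (hcent : (∫ x, x ∂μ) = 0)
    (β : ℝ → ℝ)
    (hβmono : MonotoneOn β (Ici (0 : ℝ)))
    (hβlt : ∀ r : ℝ, 0 ≤ r → β r < r)
    (hargmin : ∀ r : ℝ, 0 ≤ r → ∀ y < r,
      (∫ x, max (x - β r) 0 ∂μ) / (r - β r) ≤ (∫ x, max (x - y) 0 ∂μ) / (r - y))
    (x : ℝ) (hx : 0 < x) (hmass : 0 < μ (Ioi x)) :
    IntegrableOn (fun r => 1 / (r - β r)) (Icc (0 : ℝ) x) volume := by
  set C : ℝ → ℝ := fun y => ∫ t, max (t - y) 0 ∂μ with hC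
  set m : ℝ := (μ (Ioi x)).toReal with hmdef
  have hm : 0 < m := ENNReal.toReal_pos hmass.ne' (measure_ne_top μ _)
  have hA : ∀ y : ℝ, Integrable (fun t => max (t - y) 0) μ := by
    intro y
    have : Integrable (fun t => t - y) μ := hint.sub (integrable_const y)
    exact this.pos_part
  have hCnn : ∀ y : ℝ, 0 ≤ C y := fun y =>
    integral_nonneg fun t => le_max_right _ _
  -- C is antitone
  have hCmono : ∀ y y' : ℝ, y ≤ y' → C y' ≤ C y := by
    intro y y' hyy
    refine integral_mono (hA y') (hA y) fun t => ?_
    exact max_le_max (by linarith) le_rfl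
  -- lower bound on C
  have hB : ∀ y : ℝ, y < x → (x - y) * m ≤ C y := by
    intro y hy
    have h1 : ∫ t, (Ioi x).indicator (fun _ => x - y) t ∂μ = (x - y) * m := by
      rw [integral_indicator_const _ measurableSet_Ioi, smul_eq_mul, mul_comm]
      rfl
    rw [← h1]
    refine integral_mono ((integrable_const (x - y)).indicator measurableSet_Ioi)
      (hA y) fun t => ?_
    by_cases ht : t ∈ Ioi x
    · rw [indicator_of_mem ht]
      exact le_max_of_le_left (by simp only [mem_Ioi] at ht; linarith)
    · rw [indicator_of_notMem ht]
      exact le_max_right _ _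
  have hβ0 : β 0 < 0 := hβlt 0 le_rfl
  have hβx : β x < x := hβlt x hx.le
  set M : ℝ := C (β 0) / (0 - β 0) with hMdef
  have hM : 0 < M := by
    apply div_pos _ (by linarith)
    have := hB (β 0) (by linarith)
    nlinarith
  set ε : ℝ := (x - β x) * m / M with hεdef
  have hε : 0 < ε := div_pos (by nlinarith) hM
  -- main pointwise bound : ε ≤ r - β r for r ∈ [0, x]
  have hkey : ∀ r ∈ Icc (0 : ℝ) x, ε ≤ r - β r := by
    intro r hr
    obtain ⟨hr0, hrx⟩ := hr
    have hβr : β r < r := hβlt r hr0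
    have hd : 0 < r - β r := by linarith
    have step1 : C (β r) / (r - β r) ≤ C (β 0) / (r - β 0) :=
      hargmin r hr0 (β 0) (by linarith)
    have step2 : C (β 0) / (r - β 0) ≤ M := by
      rw [hMdef]
      apply div_le_div_of_nonneg_left (hCnn _) (by linarith) (by linarith)
    have hup : C (β r) ≤ M * (r - β r) := by
      have := le_trans step1 step2
      rw [div_le_iff₀ hd] at this
      linarith
    have hβrx : β r ≤ β x := hβmono hr0 hx.le hrx
    have hlow : (x - β x) * m ≤ C (β r) := by
      have h1 : (x - β x) * m ≤ C (β x) := hB (β x) hβx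
      have h2 : C (β x) ≤ C (β r) := hCmono _ _ hβrx
      linarith
    rw [hεdef, div_le_iff₀ hM]
    nlinarith
  -- measurability
  have hmeas : AEMeasurable β (volume.restrict (Icc (0 : ℝ) x)) :=
    aemeasurable_restrict_of_monotoneOn measurableSet_Icc
      (hβmono.mono (Icc_subset_Ici_self))
  have hsm : AEStronglyMeasurable (fun r => 1 / (r - β r))
      (volume.restrict (Icc (0 : ℝ) x)) := by
    apply AEMeasurable.aestronglyMeasurable
    simp only [one_div]
    exact (aemeasurable_id.sub hmeas).inv
  refine Integrable.mono' (integrable_const (1 / ε)) hsm ?_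
  filter_upwards [ae_restrict_mem measurableSet_Icc] with r hr
  have hder : ε ≤ r - β r := hkey r hr
  have hd : 0 < r - β r := lt_of_lt_of_le hε hder
  rw [Real.norm_eq_abs, abs_of_pos (by positivity)]
  exact one_div_le_one_div_of_le hε hder
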